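/- (Lemma A.1 of the paper.) If W ⊆ V with |W| ≥ 3 can be generated from a connected pair, then there exist X ⊆ V with W ⊆ X and i ∈ W such that D[X] is a directed sub-block, the vertex i is reachable in D[W] from every other vertex of W, and i is reachable in D[X] from every other vertex of X. -/

import Mathlib

open Set

variable {V : Type*}

/-- One arc step within the induced subgraph on the vertex set `S`. -/
def StepIn (A : V → V → Prop) (S : Set V) (u v : V) : Prop :=
  u ∈ S ∧ v ∈ S ∧ A u v

/-- `v` is reachable from `u` by a directed path in the induced subgraph on `S`
(every vertex is reachable from itself, provided it lies in `S`). -/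
def ReachIn (A : V → V → Prop) (S : Set V) (u v : V) : Prop :=
  u ∈ S ∧ Relation.ReflTransGen (StepIn A S) u v

/-- `IN(X)`: the set of vertices from which some member of `X` is reachable,
computed in the induced subgraph on `S`. -/
def InSet (A : V → V → Prop) (S : Set V) (X : Set V) : Set V :=
  {u | ∃ x ∈ X, ReachIn A S u x}

/-- `Z` is dynamically partitioning with respect to `X` and `Y`:
`IN(X) ∩ IN(Y) = ∅` computed in the induced subgraph `D − Z`. -/
def DynPart (A : V → V → Prop) (X Y Z : Set V) : Prop :=
  InSet A Zᶜ X ∩ InSet A Zᶜ Y = ∅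

/-- `StepsLe r n u v`: `v` can be reached from `u` in at most `n` `r`-steps. -/
def StepsLe (r : V → V → Prop) : ℕ → V → V → Prop
  | 0, u, v => u = v
  | n + 1, u, v => u = v ∨ ∃ w, r u w ∧ StepsLe r n w v

/-- `v` is reachable from `u` by a directed path using at most `n` arcs
in the induced subgraph on `S`. -/
def ReachInLe (A : V → V → Prop) (S : Set V) (n : ℕ) (u v : V) : Prop :=
  u ∈ S ∧ StepsLe (StepIn A S) n u v

/-- `IN_a(X)` computed in the induced subgraph on `S`. -/
def InSetLe (A : V → V → Prop) (S : Set V) (a : ℕ) (X : Set V) : Set V :=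
  {u | ∃ x ∈ X, ReachInLe A S a u x}

/-- The vertex `i` is cycle-partitioning at order `x` with respect to `X` and `Y`:
`IN_a(X) ∩ IN_b(Y) = ∅` in `D − {i}` for all `a + b = x`. -/
def CyclePart (A : V → V → Prop) (X Y : Set V) (i : V) (x : ℕ) : Prop :=
  ∀ a b : ℕ, a + b = x → InSetLe A {i}ᶜ a X ∩ InSetLe A {i}ᶜ b Y = ∅

/-- One adjacency step of the underlying (simple) graph of `D[W]`. -/
def UStep (A : V → V → Prop) (W : Set V) (u v : V) : Prop :=
  u ∈ W ∧ v ∈ W ∧ u ≠ v ∧ (A u v ∨ A v u)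

/-- The underlying graph of `D[W]` is connected. -/
def UConnected (A : V → V → Prop) (W : Set V) : Prop :=
  W.Nonempty ∧ ∀ u ∈ W, ∀ v ∈ W, Relation.ReflTransGen (UStep A W) u v

/-- The underlying graph of `D[W]` is biconnected: at least 3 vertices, connected,
and deleting any single vertex leaves a connected graph. -/
def Biconnected (A : V → V → Prop) (W : Set V) : Prop :=
  3 ≤ W.ncard ∧ UConnected A W ∧ ∀ v ∈ W, UConnected A (W \ {v})

/-- `D[W]` is a directed sub-block: some vertex of `W` is reachable in `D[W]` from
every other vertex of `W`, and the underlying graph of `D[W]` is biconnected. -/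
def DirectedSubBlock (A : V → V → Prop) (W : Set V) : Prop :=
  (∃ i ∈ W, ∀ j ∈ W, ReachIn A W j i) ∧ Biconnected A W

/-- A directed sub-block is a transmission block iff it is maximal. -/
def TransmissionBlock (A : V → V → Prop) (W : Set V) : Prop :=
  DirectedSubBlock A W ∧ ∀ U : Set V, W ⊂ U → ¬ DirectedSubBlock A U

/-- A connected pair: a two-element set `{i, j}` with an arc between `i` and `j`. -/
def ConnectedPair (A : V → V → Prop) (W : Set V) : Prop :=
  ∃ i j : V, i ≠ j ∧ W = {i, j} ∧ (A i j ∨ A j i)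

/-- `W'` is obtained from `W` by one exact generation step. -/
def ExactStep (A : V → V → Prop) (W W' : Set V) : Prop :=
  ∃ k, k ∉ W ∧ W' = W ∪ {k} ∧ ∃ j ∈ W, A k j ∧ ¬ DynPart A {k} (W \ {j}) {j}

/-- `W` is the last term of a finite chain of exact generation steps whose
first term is a connected pair. -/
def GeneratedFromPair (A : V → V → Prop) (W : Set V) : Prop :=
  ∃ P : Set V, ConnectedPair A P ∧ Relation.ReflTransGen (ExactStep A) P W

/-- `W'` is obtained from `W` by one order-`x` cycle generation step. -/
def CycleStep (A : V → V → Prop) (x : ℕ) (W W' : Set V) : Prop :=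
  ∃ k, k ∉ W ∧ W' = W ∪ {k} ∧ ∃ j ∈ W, A k j ∧ ¬ CyclePart A {k} (W \ {j}) j x

/-- `W` is the last term of a finite chain of order-`x` cycle generation steps
whose first term is a connected pair. -/
def XGenerable (A : V → V → Prop) (x : ℕ) (W : Set V) : Prop :=
  ∃ P : Set V, ConnectedPair A P ∧ Relation.ReflTransGen (CycleStep A x) P W


open Relation List

section AuxLists
variable {α : Type*} {r s : α → α → Prop}





lemma getLast?_mem_cons {a b : α} {l : List α} (h : (a::l).getLast? = some b) : b ∈ a :: l := by
  have h2 := List.getLast?_eq_getLast (l := a::l) (by simp)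
  rw [h2] at h
  have h3 := Option.some_injective _ h
  rw [← h3]
  exact List.getLast_mem _

lemma dedup_chain : ∀ (l : List α) (a b : α), Chain r a l → (a::l).getLast? = some b →
    ∃ l', Chain r a l' ∧ (a::l').getLast? = some b ∧ (a::l').Nodup ∧ ∀ x ∈ a::l', x ∈ a :: l
  | l, a, b, h, hb => by
    by_cases ha : a ∈ l
    · obtain ⟨s1, t, heq⟩ := List.append_of_mem ha
      have hlen : t.length < l.length := by
        rw [heq]; simp [List.length_append]; omega
      have h2 : Chain r a t := by
        rw [heq] at h; exact (List.isChain_cons_split.mp h).2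
      have hb2 : (a::t).getLast? = some b := by
        rw [heq] at hb
        have he : a :: (s1 ++ a :: t) = (a :: s1) ++ (a :: t) := by simp
        rw [he, List.getLast?_append] at hb
        have hne : ((a::t) : List α).getLast?.isSome := by
          rw [List.getLast?_eq_getLast (l := a::t) (by simp)]; simp
        rcases Option.isSome_iff_exists.mp hne with ⟨x, hx⟩
        rw [hx] at hb ⊢
        simpa using hb
      obtain ⟨l', hc, hl, hnd, hsub⟩ := dedup_chain t a b h2 hb2
      refine ⟨l', hc, hl, hnd, fun x hx => ?_⟩
      rcases List.mem_cons.mp (hsub x hx) with h | h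
      · simp [h]
      · rw [heq]; simp [h]
    · match l, h, hb, ha with
      | [], _, hb, _ =>
        exact ⟨[], List.Chain.nil, hb, by simp, by simp⟩
      | c :: t, h, hb, ha =>
        have hrac : r a c := (List.chain_cons.mp h).1
        have h2 : Chain r c t := (List.chain_cons.mp h).2
        have hb2 : (c::t).getLast? = some b := by
          rwa [List.getLast?_cons_cons] at hb
        have := dedup_chain t c b h2 hb2
        obtain ⟨l', hc, hl, hnd, hsub⟩ := this
        refine ⟨c :: l', List.chain_cons.mpr ⟨hrac, hc⟩, by rwa [List.getLast?_cons_cons], ?_, ?_⟩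
        · refine List.nodup_cons.mpr ⟨fun hmem => ha ?_, hnd⟩
          exact hsub a hmem
        · intro x hx
          rcases List.mem_cons.mp hx with rfl | hx
          · simp
          · exact List.mem_cons.mpr (Or.inr (hsub x hx))
  termination_by l => l.length
  decreasing_by
  · exact hlen
  · simp

lemma chain_rtg_of_mem : ∀ (l : List α) (a b u : α), Chain s a l → (a::l).getLast? = some b →
    u ∈ a::l → ReflTransGen s u b := by
  intro l
  induction l with
  | nil =>
    intro a b u _ hb hu
    simp at hb hu; subst hu; subst hb; exact ReflTransGen.refl
  | cons c t ih =>
    intro a b u h hb hu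
    rcases List.mem_cons.mp hu with rfl | hu
    · exact ReflTransGen.head (List.chain_cons.mp h).1
        (ih c b c (List.chain_cons.mp h).2 (by rwa [List.getLast?_cons_cons] at hb) (by simp))
    · exact ih c b u (List.chain_cons.mp h).2 (by rwa [List.getLast?_cons_cons] at hb) hu

lemma chain_mem_of_closed {P : α → Prop} (hP : ∀ x y, s x y → P y) :
    ∀ (l : List α) (a : α), Chain s a l → ∀ x ∈ l, P x := by
  intro l
  induction l with
  | nil => simp
  | cons c t ih =>
    intro a h x hx
    rcases List.mem_cons.mp hx with rfl | hx
    · exact hP a x (List.chain_cons.mp h).1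
    · exact ih c (List.chain_cons.mp h).2 x hx



lemma getLast?_cons_append_cons (a c : α) (s t : List α) :
    ((a :: (s ++ c :: t)) : List α).getLast? = ((c :: t) : List α).getLast? := by
  rw [show a :: (s ++ c :: t) = (a :: s) ++ (c :: t) from by simp, List.getLast?_append]
  obtain ⟨x, hx⟩ : ∃ x, ((c::t) : List α).getLast? = some x :=
    ⟨_, List.getLast?_eq_getLast (by simp)⟩
  rw [hx, Option.some_or]
end AuxLists

section AuxGraph
variable {A : V → V → Prop}

variable {A : V → V → Prop}

lemma rtg_stepin_mono {S T : Set V} (h : S ⊆ T) {u v : V}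
    (hr : ReflTransGen (StepIn A S) u v) : ReflTransGen (StepIn A T) u v :=
  Relation.ReflTransGen.mono (r := StepIn A S) (p := StepIn A T) (fun _ _ hs => ⟨h hs.1, h hs.2.1, hs.2.2⟩) _ _ hr

lemma rtg_ustep_mono {S T : Set V} (h : S ⊆ T) {u v : V}
    (hr : ReflTransGen (UStep A S) u v) : ReflTransGen (UStep A T) u v :=
  Relation.ReflTransGen.mono (r := UStep A S) (p := UStep A T) (fun _ _ hs => ⟨h hs.1, h hs.2.1, hs.2.2⟩) _ _ hr

lemma ustep_symm (S : Set V) : Symmetric (UStep A S) :=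
  fun _ _ h => ⟨h.2.1, h.1, h.2.2.1.symm, h.2.2.2.symm⟩

lemma rtg_ustep_symm {S : Set V} {u v : V} (h : ReflTransGen (UStep A S) u v) :
    ReflTransGen (UStep A S) v u :=
  (@Relation.ReflTransGen.stdSymm _ _ ⟨fun a b hab => ustep_symm S hab⟩).symm _ _ h

lemma reachin_mono {S T : Set V} (h : S ⊆ T) {u v : V} (hr : ReachIn A S u v) :
    ReachIn A T u v := ⟨h hr.1, rtg_stepin_mono h hr.2⟩

lemma rtg_u_of_d (hirr : ∀ v : V, ¬ A v v) {S : Set V} {u v : V}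
    (h : ReflTransGen (StepIn A S) u v) : ReflTransGen (UStep A S) u v :=
  Relation.ReflTransGen.mono (r := StepIn A S) (p := UStep A S) (fun a b hs => ⟨hs.1, hs.2.1, fun he => hirr a (by have h2 := hs.2.2; rw [← he] at h2; exact h2), Or.inl hs.2.2⟩) _ _ h

lemma uconn_of_root (hirr : ∀ v : V, ¬ A v v) {S : Set V} {r : V} (hr : r ∈ S)
    (h : ∀ v ∈ S, ReachIn A S v r) : UConnected A S := by
  refine ⟨⟨r, hr⟩, fun u hu v hv => ?_⟩
  exact (rtg_u_of_d hirr (h u hu).2).trans (rtg_ustep_symm (rtg_u_of_d hirr (h v hv).2))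

lemma uconn_singleton (a : V) : UConnected A {a} := by
  refine ⟨⟨a, rfl⟩, fun u hu v hv => ?_⟩
  simp only [Set.mem_singleton_iff] at hu hv
  subst hu; subst hv; exact ReflTransGen.refl

lemma strengthen_chain_d {T : Set V} : ∀ (l : List V) (a : V),
    Chain (fun x y => A x y) a l → (∀ x ∈ a::l, x ∈ T) → Chain (StepIn A T) a l := by
  intro l
  induction l with
  | nil => intro a _ _; exact List.Chain.nil
  | cons c t ih =>
    intro a h hsub
    refine List.chain_cons.mpr ⟨⟨hsub a (by simp), hsub c (by simp), (List.chain_cons.mp h).1⟩, ?_⟩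
    exact ih c (List.chain_cons.mp h).2 (fun x hx => hsub x (by simp [List.mem_cons] at hx ⊢; tauto))

lemma strengthen_chain_u {T : Set V} : ∀ (l : List V) (a : V),
    Chain (fun x y => A x y ∨ A y x) a l → (a::l).Nodup → (∀ x ∈ a::l, x ∈ T) →
    Chain (UStep A T) a l := by
  intro l
  induction l with
  | nil => intro a _ _ _; exact List.Chain.nil
  | cons c t ih =>
    intro a h hnd hsub
    have hac : a ≠ c := by
      intro he; subst he; simp at hnd
    refine List.chain_cons.mpr ⟨⟨hsub a (by simp), hsub c (by simp), hac, (List.chain_cons.mp h).1⟩, ?_⟩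
    exact ih c (List.chain_cons.mp h).2 (List.nodup_cons.mp hnd).2
      (fun x hx => hsub x (by simp [List.mem_cons] at hx ⊢; tauto))

/-- From a directed reach within `S`, obtain a nodup arc-chain all of whose
vertices lie in `S`. -/
lemma reach_to_path {S : Set V} {u v : V} (h : ReachIn A S u v) :
    ∃ l, Chain (fun x y => A x y) u l ∧ ((u::l) : List V).getLast? = some v ∧
      (u::l).Nodup ∧ ∀ x ∈ u::l, x ∈ S := by
  obtain ⟨l0, hc0, hlast0⟩ := List.exists_isChain_cons_of_relationReflTransGen h.2
  have hlast0' : ((u::l0) : List V).getLast? = some v := by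
    rw [List.getLast?_eq_getLast (l := u::l0) (by simp), hlast0]
  obtain ⟨l, hc, hlast, hnd, hsub⟩ := dedup_chain l0 u v hc0 hlast0'
  refine ⟨l, List.IsChain.imp (fun ⦃x y⦄ hs => hs.2.2) hc, hlast, hnd, fun x hx => ?_⟩
  rcases List.mem_cons.mp (hsub x hx) with rfl | hx'
  · exact h.1
  · exact chain_mem_of_closed (fun x y (hs : StepIn A S x y) => hs.2.1) l0 u hc0 x hx'

/-- Deleting one vertex from a nodup undirected path: every remaining vertex still
reaches one of the two endpoints, which moreover differs from the deleted vertex. -/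
lemma path_del : ∀ (l : List V) (a b v u : V),
    Chain (fun x y => A x y ∨ A y x) a l → (a::l).Nodup → ((a::l) : List V).getLast? = some b →
    u ∈ a::l → u ≠ v →
    (v ≠ a ∧ ReflTransGen (UStep A ({x | x ∈ a::l} \ {v})) u a) ∨
    (v ≠ b ∧ ReflTransGen (UStep A ({x | x ∈ a::l} \ {v})) u b) := by
  intro l
  induction l with
  | nil =>
    intro a b v u _ _ hb hu huv
    simp at hb hu; subst hu; subst hb
    exact Or.inl ⟨fun he => huv he.symm, ReflTransGen.refl⟩
  | cons c t ih =>
    intro a b v u hch hnd hb hu huv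
    rcases List.mem_cons.mp hu with rfl | hu
    · exact Or.inl ⟨fun he => huv he.symm, ReflTransGen.refl⟩
    · have hch2 := (List.chain_cons.mp hch).2
      have hnd2 := (List.nodup_cons.mp hnd).2
      have hb2 : ((c::t) : List V).getLast? = some b := by rwa [List.getLast?_cons_cons] at hb
      by_cases hva : v = a
      · refine Or.inr ⟨?_, ?_⟩
        · have hbm : b ∈ c :: t := getLast?_mem_cons hb2
          intro he; rw [← he, hva] at hbm
          exact (List.nodup_cons.mp hnd).1 hbm
        · have hchU : Chain (UStep A ({x | x ∈ c::t})) c t :=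
            strengthen_chain_u t c hch2 hnd2 (fun x hx => hx)
          have hru := chain_rtg_of_mem t c b u hchU hb2 hu
          refine rtg_ustep_mono ?_ hru
          intro x hx
          refine ⟨List.mem_cons.mpr (Or.inr hx), fun he => (List.nodup_cons.mp hnd).1 ?_⟩
          simp only [Set.mem_singleton_iff] at he
          rw [← hva, ← he]; exact hx
      · rcases ih c b v u hch2 hnd2 hb2 hu huv with ⟨hvc, hr⟩ | ⟨hvb, hr⟩
        · refine Or.inl ⟨hva, ?_⟩
          have hmono : ({x | x ∈ c::t} : Set V) \ {v} ⊆ {x | x ∈ a::c::t} \ {v} := by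
            intro x hx; exact ⟨List.mem_cons.mpr (Or.inr hx.1), hx.2⟩
          refine (rtg_ustep_mono hmono hr).tail ?_
          refine ⟨⟨by simp, fun he => hvc (by simpa using he.symm)⟩,
                  ⟨by simp, fun he => hva (by simpa using he.symm)⟩, ?_, ?_⟩
          · intro he; subst he; exact (List.nodup_cons.mp hnd).1 (by simp)
          · exact ((List.chain_cons.mp hch).1).symm
        · refine Or.inr ⟨hvb, ?_⟩
          refine rtg_ustep_mono ?_ hr
          intro x hx; exact ⟨List.mem_cons.mpr (Or.inr hx.1), hx.2⟩

/-- Core construction: attach an ear from `j` to `w` through `k`. -/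
lemma ear_extend (hirr : ∀ v : V, ¬ A v v) {B : Set V} {r j w k : V}
    (hrB : r ∈ B) (hroot : ∀ v ∈ B, ReachIn A B v r)
    (hdel : ∀ v : V, UConnected A (B \ {v}))
    (hjB : j ∈ B) (hwB : w ∈ B) (hwj : w ≠ j) (hkB : k ∉ B) (hAkj : A k j)
    (hreach : ∃ u, ReachIn A ({j}ᶜ : Set V) u k ∧ ReachIn A ({j}ᶜ : Set V) u w) :
    ∃ X, B ⊆ X ∧ k ∈ X ∧ (∀ v ∈ X, ReachIn A X v r) ∧ (∀ v : V, UConnected A (X \ {v})) := by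
  classical
  set P : ℕ → Prop := fun n => ∃ (u : V) (l1 l2 : List V), Chain (fun x y => A x y) u l1 ∧
    Chain (fun x y => A x y) u l2 ∧
    ((u::l1) : List V).getLast? = some k ∧ ((u::l2) : List V).getLast? = some w ∧
    (u::l1).Nodup ∧ (u::l2).Nodup ∧
    (∀ x ∈ u::l1, x ≠ j) ∧ (∀ x ∈ u::l2, x ≠ j) ∧ l1.length + l2.length = n with hP
  have hPex : ∃ n, P n := by
    obtain ⟨u, huk, huw⟩ := hreach
    obtain ⟨l1, hc1, hk1, hnd1, hs1⟩ := reach_to_path huk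
    obtain ⟨l2, hc2, hw2, hnd2, hs2⟩ := reach_to_path huw
    exact ⟨l1.length + l2.length, u, l1, l2, hc1, hc2, hk1, hw2, hnd1, hnd2,
      fun x hx => Set.mem_compl_singleton_iff.mp (hs1 x hx),
      fun x hx => Set.mem_compl_singleton_iff.mp (hs2 x hx), rfl⟩
  obtain ⟨u, l1, l2, hc1, hc2, hk1, hw2, hnd1, hnd2, hj1, hj2, hlen⟩ := Nat.find_spec hPex
  have hdisj : ∀ z, z ∈ u :: l1 → z ∈ u :: l2 → z = u := by
    intro z hz1 hz2
    by_contra hzu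
    have hz1' : z ∈ l1 := by
      rcases List.mem_cons.mp hz1 with rfl | h
      · exact absurd rfl hzu
      · exact h
    have hz2' : z ∈ l2 := by
      rcases List.mem_cons.mp hz2 with rfl | h
      · exact absurd rfl hzu
      · exact h
    obtain ⟨s1, t1, he1⟩ := List.append_of_mem hz1'
    obtain ⟨s2, t2, he2⟩ := List.append_of_mem hz2'
    have hPn : P (t1.length + t2.length) := by
      refine ⟨z, t1, t2, ?_, ?_, ?_, ?_, ?_, ?_, ?_, ?_, rfl⟩
      · exact (List.isChain_cons_split.mp (he1 ▸ hc1)).2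
      · exact (List.isChain_cons_split.mp (he2 ▸ hc2)).2
      · rw [← hk1, he1]; exact (getLast?_cons_append_cons u z s1 t1).symm
      · rw [← hw2, he2]; exact (getLast?_cons_append_cons u z s2 t2).symm
      · have he : (u :: l1) = (u :: s1) ++ (z :: t1) := by rw [he1]; simp
        exact (List.nodup_append'.mp (he ▸ hnd1)).2.1
      · have he : (u :: l2) = (u :: s2) ++ (z :: t2) := by rw [he2]; simp
        exact (List.nodup_append'.mp (he ▸ hnd2)).2.1
      · intro x hx
        refine hj1 x ?_
        rw [he1]
        rcases List.mem_cons.mp hx with rfl | h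
        · simp
        · simp [h]
      · intro x hx
        refine hj2 x ?_
        rw [he2]
        rcases List.mem_cons.mp hx with rfl | h
        · simp
        · simp [h]
    have hlt : t1.length + t2.length < Nat.find hPex := by
      rw [← hlen, he1, he2]; simp [List.length_append]; omega
    exact Nat.find_min hPex hlt hPn
  -- build the ear E = j :: (reverse (u::l1) ++ l2)
  set C1 : List V := u :: l1 with hC1
  set E : List V := j :: (C1.reverse ++ l2) with hE
  have hkC1 : k ∈ C1 := getLast?_mem_cons hk1
  have hmemE : ∀ x, x ∈ E ↔ x = j ∨ x ∈ C1 ∨ x ∈ l2 := by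
    intro x; simp [hE, List.mem_append, List.mem_reverse, or_assoc]
  have hC1' : Chain' (fun x y => A x y ∨ A y x) C1.reverse := by
    show List.IsChain _ _
    rw [List.isChain_reverse]
    exact List.IsChain.imp (fun ⦃a b⦄ h => Or.symm h)
      (show Chain' (fun x y => A x y ∨ A y x) C1 from List.IsChain.imp (fun ⦃a b⦄ h => Or.inl h) hc1)
  have hl2' : Chain' (fun x y => A x y ∨ A y x) l2 :=
    (show Chain' (fun x y => A x y ∨ A y x) (u::l2) from List.IsChain.imp (fun ⦃a b⦄ h => Or.inl h) hc2).tail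
  have hmid : Chain' (fun x y => A x y ∨ A y x) (C1.reverse ++ l2) := by
    show List.IsChain _ _
    rw [List.isChain_append]
    refine ⟨hC1', hl2', ?_⟩
    intro x hx y hy
    rw [List.getLast?_reverse] at hx
    have hxu : u = x := by
      rw [hC1] at hx; simp at hx; exact hx
    subst hxu
    cases l2 with
    | nil => simp at hy
    | cons c t =>
      simp at hy; subst hy
      exact Or.inl (List.chain_cons.mp hc2).1
  have hadjE : Chain (fun x y => A x y ∨ A y x) j (C1.reverse ++ l2) := by
    have : Chain' (fun x y => A x y ∨ A y x) ([j] ++ (C1.reverse ++ l2)) := by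
      show List.IsChain _ _
      rw [List.isChain_append]
      refine ⟨List.isChain_singleton j, hmid, ?_⟩
      intro x hx y hy
      simp at hx; subst hx
      rw [List.head?_append, List.head?_reverse, hk1] at hy
      simp [Option.or_some] at hy
      subst hy
      exact Or.inr hAkj
    exact this
  have hjE : ∀ x, x ∈ C1.reverse ++ l2 → x ≠ j := by
    intro x hx
    rcases List.mem_append.mp hx with h | h
    · exact hj1 x (List.mem_reverse.mp h)
    · exact hj2 x (List.mem_cons.mpr (Or.inr h))
  have hndE : E.Nodup := by
    rw [hE]
    refine List.nodup_cons.mpr ⟨fun h => hjE j h rfl, ?_⟩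
    refine List.nodup_append'.mpr ⟨List.nodup_reverse.mpr hnd1, (List.nodup_cons.mp hnd2).2, ?_⟩
    intro x hx1 hx2
    have hxu := hdisj x (List.mem_reverse.mp hx1) (List.mem_cons.mpr (Or.inr hx2))
    subst hxu
    exact (List.nodup_cons.mp hnd2).1 hx2
  have hlastE : E.getLast? = some w := by
    rw [hE, show (j :: (C1.reverse ++ l2) : List V) = (j :: C1.reverse) ++ l2 from by simp,
        List.getLast?_append]
    cases l2 with
    | nil =>
      have hwu : u = w := by simpa [hC1] using hw2
      have hjl : ((j :: C1.reverse) : List V).getLast? = some u := by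
        rw [show (j :: C1.reverse : List V) = [j] ++ C1.reverse from rfl, List.getLast?_append,
            List.getLast?_reverse]
        simp [hC1]
      simp [hjl, hwu]
    | cons c t =>
      have hcl : ((c::t) : List V).getLast? = some w := by
        have h2 := hw2
        rwa [List.getLast?_cons_cons] at h2
      rw [hcl, Option.some_or]
  refine ⟨B ∪ {x | x ∈ E}, Set.subset_union_left, Or.inr ((hmemE k).mpr (Or.inr (Or.inl hkC1))), ?_, ?_⟩
  · -- root property
    intro v hv
    have hsubB : B ⊆ B ∪ {x | x ∈ E} := Set.subset_union_left
    have hC1X : ∀ x ∈ C1, x ∈ B ∪ {x | x ∈ E} := fun x hx => Or.inr ((hmemE x).mpr (Or.inr (Or.inl hx)))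
    have hC2X : ∀ x ∈ u :: l2, x ∈ B ∪ {x | x ∈ E} := by
      intro x hx
      rcases List.mem_cons.mp hx with rfl | hx
      · exact hC1X x (by simp [hC1])
      · exact Or.inr ((hmemE x).mpr (Or.inr (Or.inr hx)))
    have hjr : Relation.ReflTransGen (StepIn A (B ∪ {x | x ∈ E})) j r :=
      rtg_stepin_mono hsubB (hroot j hjB).2
    rcases hv with hvB | hvE
    · exact reachin_mono hsubB (hroot v hvB)
    · rw [Set.mem_setOf_eq, hmemE] at hvE
      rcases hvE with rfl | hv1 | hv2
      · exact ⟨hsubB hjB, hjr⟩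
      · have hch : Chain (StepIn A (B ∪ {x | x ∈ E})) u l1 := strengthen_chain_d l1 u hc1 hC1X
        have hvk := chain_rtg_of_mem l1 u k v hch hk1 hv1
        have hkj : StepIn A (B ∪ {x | x ∈ E}) k j := ⟨hC1X k hkC1, hsubB hjB, hAkj⟩
        exact ⟨hC1X v hv1, (hvk.tail hkj).trans hjr⟩
      · have hch : Chain (StepIn A (B ∪ {x | x ∈ E})) u l2 := strengthen_chain_d l2 u hc2 hC2X
        have hvw := chain_rtg_of_mem l2 u w v hch hw2 (List.mem_cons.mpr (Or.inr hv2))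
        exact ⟨hC2X v (List.mem_cons.mpr (Or.inr hv2)),
          hvw.trans (rtg_stepin_mono hsubB (hroot w hwB).2)⟩
  · -- biconnectivity part
    intro v
    have hsubB : B ⊆ B ∪ {x | x ∈ E} := Set.subset_union_left
    set t0 : V := if v = j then w else j with ht0
    have ht0B : t0 ∈ B := by
      rw [ht0]; split_ifs
      · exact hwB
      · exact hjB
    have ht0v : t0 ≠ v := by
      rw [ht0]; split_ifs with h
      · rw [h]; exact hwj
      · exact fun he => h he.symm
    have hBreach : ∀ p ∈ B \ {v}, Relation.ReflTransGen (UStep A ((B ∪ {x | x ∈ E}) \ {v})) p t0 := by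
      intro p hp
      have ht0m : t0 ∈ B \ {v} := ⟨ht0B, by simpa using ht0v⟩
      have h2 := (hdel v).2 p hp t0 ht0m
      have hmB : B \ {v} ⊆ (B ∪ {x | x ∈ E}) \ {v} := fun x hx => ⟨hsubB hx.1, hx.2⟩
      exact rtg_ustep_mono hmB h2
    have hall : ∀ q ∈ (B ∪ {x | x ∈ E}) \ {v},
        Relation.ReflTransGen (UStep A ((B ∪ {x | x ∈ E}) \ {v})) q t0 := by
      rintro q ⟨hqX, hqv⟩
      have hqv' : q ≠ v := by simpa using hqv
      rcases hqX with hqB | hqE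
      · have hq2 : q ∈ B \ {v} := ⟨hqB, by simpa using hqv'⟩
        exact hBreach q hq2
      · rw [Set.mem_setOf_eq] at hqE
        have hmonoE : ({x | x ∈ E} : Set V) \ {v} ⊆ (B ∪ {x | x ∈ E}) \ {v} :=
          fun x hx => ⟨Or.inr hx.1, hx.2⟩
        rcases path_del (C1.reverse ++ l2) j w v q hadjE hndE hlastE hqE hqv' with
          ⟨hvj, hr⟩ | ⟨hvw2, hr⟩
        · have ht0j : t0 = j := by rw [ht0, if_neg hvj]
          rw [ht0j]
          exact rtg_ustep_mono hmonoE hr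
        · have hwv : w ≠ v := fun he => hvw2 he.symm
          have hwm : w ∈ B \ {v} := ⟨hwB, by simpa using hwv⟩
          exact (rtg_ustep_mono hmonoE hr).trans (hBreach w hwm)
    refine ⟨⟨t0, ⟨Or.inl ht0B, by simpa using ht0v⟩⟩, fun a ha b hb => ?_⟩
    exact (hall a ha).trans (rtg_ustep_symm (hall b hb))


/-- The induction invariant along a generation chain. -/
def INVP (A : V → V → Prop) (W : Set V) : Prop :=
  2 ≤ W.ncard ∧ ∃ r ∈ W, (∀ v ∈ W, ReachIn A W v r) ∧
    (3 ≤ W.ncard → ∃ X, W ⊆ X ∧ (∀ v ∈ X, ReachIn A X v r) ∧ ∀ v : V, UConnected A (X \ {v}))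

lemma invp_base {A : V → V → Prop} {P : Set V} (h : ConnectedPair A P) : INVP A P := by
  obtain ⟨i, j, hij, rfl, harc⟩ := h
  have hcard : ({i, j} : Set V).ncard = 2 := Set.ncard_pair hij
  rcases harc with h1 | h1
  · refine ⟨by omega, j, by simp, ?_, by omega⟩
    intro v hv
    rcases hv with rfl | hv
    · exact ⟨by simp, ReflTransGen.single ⟨by simp, by simp, h1⟩⟩
    · rw [Set.mem_singleton_iff] at hv; subst hv
      exact ⟨by simp, ReflTransGen.refl⟩
  · refine ⟨by omega, i, by simp, ?_, by omega⟩
    intro v hv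
    rcases hv with rfl | hv
    · exact ⟨by simp, ReflTransGen.refl⟩
    · rw [Set.mem_singleton_iff] at hv; subst hv
      exact ⟨by simp, ReflTransGen.single ⟨by simp, by simp, h1⟩⟩

lemma invp_step [Fintype V] {A : V → V → Prop} (hirr : ∀ v : V, ¬ A v v) {W W' : Set V}
    (hi : INVP A W) (hs : ExactStep A W W') : INVP A W' := by
  obtain ⟨hcard2, r, hrW, hroot, hX3⟩ := hi
  obtain ⟨k, hkW, rfl, j, hjW, hAkj, hdp⟩ := hs
  have hWW' : W ⊆ W ∪ {k} := Set.subset_union_left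
  have hkW' : k ∈ W ∪ {k} := Or.inr rfl
  refine ⟨le_trans hcard2 (Set.ncard_le_ncard hWW' (Set.toFinite _)), r, hWW' hrW, ?_, ?_⟩
  · intro v hv
    rcases hv with hvW | hvk
    · exact reachin_mono hWW' (hroot v hvW)
    · rw [Set.mem_singleton_iff] at hvk; subst hvk
      exact ⟨hkW', ReflTransGen.head ⟨hkW', hWW' hjW, hAkj⟩
        (rtg_stepin_mono hWW' (hroot j hjW).2)⟩
  · intro _
    rw [DynPart, Set.eq_empty_iff_forall_notMem] at hdp
    push_neg at hdp
    obtain ⟨u, hu1, hu2⟩ := hdp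
    obtain ⟨k', hk', huk⟩ := hu1
    rw [Set.mem_singleton_iff] at hk'
    rw [hk'] at huk
    obtain ⟨w, hw, huw⟩ := hu2
    have hwW : w ∈ W := hw.1
    have hwj : w ≠ j := by simpa using hw.2
    rcases lt_or_ge W.ncard 3 with h2 | h3
    · have hW2 : W.ncard = 2 := le_antisymm (by omega) hcard2
      obtain ⟨a, b, hab, hWab⟩ := Set.ncard_eq_two.mp hW2
      have hdelW : ∀ v : V, UConnected A (W \ {v}) := by
        intro v
        by_cases hvW : v ∈ W
        · rw [hWab] at hvW ⊢
          simp only [Set.mem_insert_iff, Set.mem_singleton_iff] at hvW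
          rcases hvW with rfl | rfl
          · rw [Set.pair_diff_left hab]; exact uconn_singleton b
          · rw [Set.pair_diff_right hab]; exact uconn_singleton a
        · rw [Set.diff_singleton_eq_self hvW]
          exact uconn_of_root hirr hrW hroot
      obtain ⟨X, hBX, hkX, hrootX, hdelX⟩ :=
        ear_extend hirr hrW hroot hdelW hjW hwW hwj hkW hAkj ⟨u, huk, huw⟩
      exact ⟨X, Set.union_subset hBX (Set.singleton_subset_iff.mpr hkX), hrootX, hdelX⟩
    · obtain ⟨X, hWX, hrootX, hdelX⟩ := hX3 h3
      by_cases hkX : k ∈ X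
      · exact ⟨X, Set.union_subset hWX (Set.singleton_subset_iff.mpr hkX), hrootX, hdelX⟩
      · obtain ⟨X', hXX', hkX', hrootX', hdelX'⟩ :=
          ear_extend hirr (hWX hrW) hrootX hdelX (hWX hjW) (hWX hwW) hwj hkX hAkj ⟨u, huk, huw⟩
        exact ⟨X', Set.union_subset (hWX.trans hXX') (Set.singleton_subset_iff.mpr hkX'),
          hrootX', hdelX'⟩

end AuxGraph

/-- Lemma A.1. -/
theorem stmt7 [Fintype V] (A : V → V → Prop) (hirr : ∀ v : V, ¬ A v v)
    (W : Set V) (hWcard : 3 ≤ W.ncard) (hgen : GeneratedFromPair A W) :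
    ∃ X : Set V, W ⊆ X ∧ ∃ i ∈ W, DirectedSubBlock A X ∧
      (∀ v ∈ W, ReachIn A W v i) ∧ (∀ v ∈ X, ReachIn A X v i) := by
  obtain ⟨P, hpair, hchain⟩ := hgen
  have hinv : INVP A W := by
    clear hWcard
    induction hchain with
    | refl => exact invp_base hpair
    | tail hsteps hstep ih => exact invp_step hirr ih hstep
  obtain ⟨-, r, hrW, hrootW, hX3⟩ := hinv
  obtain ⟨X, hWX, hrootX, hdelX⟩ := hX3 hWcard
  have hcardX : 3 ≤ X.ncard := le_trans hWcard (Set.ncard_le_ncard hWX (Set.toFinite _))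
  exact ⟨X, hWX, r, hrW, ⟨⟨r, hWX hrW, fun j hj => hrootX j hj⟩, hcardX,
    uconn_of_root hirr (hWX hrW) hrootX, fun v _ => hdelX v⟩, hrootW, hrootX⟩
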